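/- Fix real numbers $a, b, W$ with $0 \le a < b$ and $W > 0$. Let $x_1, x_2, \ldots$ be sampled uniformly and independently from the interval $(W/2, W)$. Then the probability that there exists an index $j$ such that $\sum_{i \le j} x_i \in [a, b]$ is at most $4(b-a)/W$. -/

import Mathlib

open MeasureTheory ProbabilityTheory
open scoped ENNReal

/-- Fix reals `0 ≤ a < b` and `W > 0`. If `x 0, x 1, …` are i.i.d. uniform on `(W/2, W)`,
then the probability that some partial sum `x 0 + ⋯ + x j` lies in `[a, b]`
is at most `4 (b - a) / W`. -/
theorem stmt_0 {Ω : Type*} [MeasurableSpace Ω] (μ : Measure Ω) [IsProbabilityMeasure μ]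
    (a b W : ℝ) (ha : 0 ≤ a) (hab : a < b) (hW : 0 < W)
    (x : ℕ → Ω → ℝ) (hmeas : ∀ i, Measurable (x i))
    (hindep : iIndepFun x μ)
    (hunif : ∀ i, pdf.IsUniform (x i) (Set.Ioo (W / 2) W) μ) :
    μ {ω | ∃ j : ℕ, (∑ i ∈ Finset.range (j + 1), x i ω) ∈ Set.Icc a b}
      ≤ ENNReal.ofReal (4 * (b - a) / W) := by
  classical
  have hW2 : (0:ℝ) < W / 2 := by linarith
  have hIoo : MeasurableSet (Set.Ioo (W/2) W) := measurableSet_Ioo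
  have hvol : volume (Set.Ioo (W/2) W) = ENNReal.ofReal (W/2) := by
    rw [Real.volume_Ioo]; congr 1; ring
  have hns : volume (Set.Ioo (W/2) W) ≠ 0 := by
    rw [hvol]; exact (ENNReal.ofReal_pos.2 hW2).ne'
  have hnt : volume (Set.Ioo (W/2) W) ≠ ⊤ := by rw [hvol]; exact ENNReal.ofReal_ne_top
  -- partial sums
  set T : ℕ → Ω → ℝ := fun k => ∑ i ∈ Finset.range k, x i with hTdef
  have hTapp : ∀ k ω, T k ω = ∑ i ∈ Finset.range k, x i ω := by
    intro k ω; simp [hTdef, Finset.sum_apply]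
  have hTsucc : ∀ k ω, T (k+1) ω = T k ω + x k ω := by
    intro k ω; rw [hTapp, hTapp, Finset.sum_range_succ]
  have hTmeas : ∀ k, Measurable (T k) := by
    intro k
    have h : T k = fun ω => ∑ i ∈ Finset.range k, x i ω := funext fun ω => hTapp k ω
    rw [h]
    exact Finset.measurable_sum _ (fun i _ => hmeas i)
  set Win : Set ℝ := Set.Icc (a - W) a with hWinDef
  set G : Set Ω := {ω | ∀ i, x i ω ∈ Set.Ioo (W/2) W} with hGdef
  have hGmeas : MeasurableSet G := by
    have : G = ⋂ i, x i ⁻¹' Set.Ioo (W/2) W := by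
      ext ω; simp [hGdef, Set.mem_iInter]
    rw [this]; exact MeasurableSet.iInter (fun i => (hmeas i) hIoo)
  have hGfull : μ Gᶜ = 0 := by
    have h1 : ∀ i, μ ((x i ⁻¹' Set.Ioo (W/2) W)ᶜ) = 0 := by
      intro i
      rw [prob_compl_eq_zero_iff ((hmeas i) hIoo)]
      rw [(hunif i).measure_preimage hns hnt hIoo, Set.inter_self,
        ENNReal.div_self hns hnt]
    have hsub : Gᶜ ⊆ ⋃ i, (x i ⁻¹' Set.Ioo (W/2) W)ᶜ := by
      intro ω hω
      simp only [hGdef, Set.mem_compl_iff, Set.mem_setOf_eq, not_forall] at hω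
      obtain ⟨i, hi⟩ := hω
      exact Set.mem_iUnion.2 ⟨i, hi⟩
    refine le_antisymm (le_trans (measure_mono hsub) ?_) zero_le
    refine le_trans (measure_iUnion_le _) ?_
    simp [h1]
  -- constant c = 2(b-a)/W
  set c : ℝ≥0∞ := ENNReal.ofReal ((b - a) / (W/2)) with hcdef
  -- the "first entrance" events
  set B : ℕ → Set Ω := fun j =>
    {ω | T j ω ∈ Win ∧ T j ω + x j ω ∈ Set.Icc a b} with hBdef
  -- uniform measure of a short interval
  have hshort : ∀ (j : ℕ) (s : ℝ),
      μ (x j ⁻¹' Set.Icc (a - s) (b - s)) ≤ c := by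
    intro j s
    rw [(hunif j).measure_preimage hns hnt measurableSet_Icc]
    calc volume (Set.Ioo (W/2) W ∩ Set.Icc (a - s) (b - s)) / volume (Set.Ioo (W/2) W)
        ≤ volume (Set.Icc (a - s) (b - s)) / volume (Set.Ioo (W/2) W) :=
          ENNReal.div_le_div_right (measure_mono Set.inter_subset_right) _
      _ = ENNReal.ofReal (b - a) / ENNReal.ofReal (W/2) := by
          rw [Real.volume_Icc, hvol]; ring_nf
      _ = c := by rw [hcdef, ENNReal.ofReal_div_of_pos hW2]
  -- Step D : bound on μ (B j)
  have hBj : ∀ j, μ (B j) ≤ c * μ (T j ⁻¹' Win) := by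
    intro j
    haveI : IsProbabilityMeasure (μ.map (x j)) :=
      Measure.isProbabilityMeasure_map (hmeas j).aemeasurable
    set C : Set (ℝ × ℝ) :=
      (fun p : ℝ × ℝ => p.1) ⁻¹' Win ∩ (fun p : ℝ × ℝ => p.1 + p.2) ⁻¹' Set.Icc a b
      with hCdef
    have hCmeas : MeasurableSet C :=
      (measurable_fst measurableSet_Icc).inter
        ((measurable_fst.add measurable_snd) measurableSet_Icc)
    have hpair : Measurable (fun ω => (T j ω, x j ω)) :=
      (hTmeas j).prodMk (hmeas j)
    have hBC : B j = (fun ω => (T j ω, x j ω)) ⁻¹' C := by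
      ext ω; simp [hBdef, hCdef]
    have hind : IndepFun (T j) (x j) μ := by
      have := hindep.indepFun_finsetSum_of_notMem hmeas
        (Finset.notMem_range_self (n := j))
      exact this
    have hmapeq : μ.map (fun ω => (T j ω, x j ω))
        = (μ.map (T j)).prod (μ.map (x j)) :=
      (indepFun_iff_map_prod_eq_prod_map_map (hTmeas j).aemeasurable
        (hmeas j).aemeasurable).1 hind
    rw [hBC, ← Measure.map_apply hpair hCmeas, hmapeq, Measure.prod_apply hCmeas]
    have hbound : ∀ s : ℝ, (μ.map (x j)) (Prod.mk s ⁻¹' C)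
        ≤ Win.indicator (fun _ => c) s := by
      intro s
      by_cases hs : s ∈ Win
      · rw [Set.indicator_of_mem hs]
        have hsub : Prod.mk s ⁻¹' C ⊆ Set.Icc (a - s) (b - s) := by
          intro t ht
          simp only [hCdef, Set.mem_preimage, Set.mem_inter_iff, Set.mem_Icc] at ht ⊢
          constructor <;> linarith [ht.2.1, ht.2.2]
        calc (μ.map (x j)) (Prod.mk s ⁻¹' C)
            ≤ (μ.map (x j)) (Set.Icc (a - s) (b - s)) := measure_mono hsub
          _ = μ (x j ⁻¹' Set.Icc (a - s) (b - s)) :=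
              Measure.map_apply (hmeas j) measurableSet_Icc
          _ ≤ c := hshort j s
      · rw [Set.indicator_of_notMem hs]
        have : Prod.mk s ⁻¹' C = ∅ := by
          ext t; simp [hCdef, hs]
        simp [this]
    calc ∫⁻ s, (μ.map (x j)) (Prod.mk s ⁻¹' C) ∂(μ.map (T j))
        ≤ ∫⁻ s, Win.indicator (fun _ => c) s ∂(μ.map (T j)) :=
          lintegral_mono hbound
      _ = c * (μ.map (T j)) Win := by
          rw [lintegral_indicator measurableSet_Icc, setLIntegral_const]
      _ = c * μ (T j ⁻¹' Win) := by
          rw [Measure.map_apply (hTmeas j) measurableSet_Icc]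
  -- Step E : ∑' j, μ (T j ⁻¹' Win) ≤ 2
  have hsum2 : ∑' j : ℕ, μ (T j ⁻¹' Win) ≤ 2 := by
    have heq : ∀ j, μ (T j ⁻¹' Win) = μ (T j ⁻¹' Win ∩ G) := fun j =>
      (measure_inter_conull hGfull).symm
    set D : ℕ → Set Ω := fun j => T j ⁻¹' Win ∩ G with hDdef
    have hDmeas : ∀ j, MeasurableSet (D j) := fun j =>
      ((hTmeas j) measurableSet_Icc).inter hGmeas
    have hpt : ∀ ω, (∑' j : ℕ, (D j).indicator (1 : Ω → ℝ≥0∞) ω) ≤ 2 := by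
      intro ω
      by_cases hωG : ω ∈ G
      · -- increments
        have hx : ∀ i, x i ω ∈ Set.Ioo (W/2) W := hωG
        have hstep : ∀ k, T k ω + W/2 < T (k+1) ω := by
          intro k; rw [hTsucc]; linarith [(hx k).1]
        have hmono : Monotone (fun k => T k ω) :=
          monotone_nat_of_le_succ (fun k => by linarith [hstep k])
        by_cases hS : ∃ j, T j ω ∈ Win
        · set m := Nat.find hS with hmdef
          have hmWin : T m ω ∈ Win := Nat.find_spec hS
          have hkey : ∀ j, ω ∈ D j → j = m ∨ j = m + 1 := by
            intro j hj
            have hjWin : T j ω ∈ Win := hj.1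
            have hmj : m ≤ j := Nat.find_min' hS hjWin
            by_contra hcon
            push_neg at hcon
            have hj2 : m + 2 ≤ j := by omega
            have h1 : T m ω + W < T (m+2) ω := by
              have := hstep m; have := hstep (m+1); linarith
            have h2 : T (m+2) ω ≤ T j ω := hmono hj2
            rw [hWinDef, Set.mem_Icc] at hjWin hmWin
            linarith [hjWin.2, hmWin.1]
          have hzero : ∀ j ∉ ({m, m+1} : Finset ℕ),
              (D j).indicator (1 : Ω → ℝ≥0∞) ω = 0 := by
            intro j hj
            simp only [Finset.mem_insert, Finset.mem_singleton] at hj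
            push_neg at hj
            apply Set.indicator_of_notMem
            intro hmem
            rcases hkey j hmem with h | h
            · exact hj.1 h
            · exact hj.2 h
          rw [tsum_eq_sum hzero]
          have hle1 : ∀ j, (D j).indicator (1 : Ω → ℝ≥0∞) ω ≤ 1 := by
            intro j
            by_cases h : ω ∈ D j
            · rw [Set.indicator_of_mem h]; exact le_refl _
            · rw [Set.indicator_of_notMem h]; exact zero_le
          have : m ∉ ({m+1} : Finset ℕ) := by simp
          rw [Finset.sum_insert this, Finset.sum_singleton]
          calc (D m).indicator (1 : Ω → ℝ≥0∞) ω
                + (D (m+1)).indicator (1 : Ω → ℝ≥0∞) ω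
              ≤ 1 + 1 := add_le_add (hle1 m) (hle1 (m+1))
            _ = 2 := by norm_num
        · push_neg at hS
          have : ∀ j, (D j).indicator (1 : Ω → ℝ≥0∞) ω = 0 := by
            intro j
            apply Set.indicator_of_notMem
            intro hmem
            exact hS j hmem.1
          simp [this]
      · have : ∀ j, (D j).indicator (1 : Ω → ℝ≥0∞) ω = 0 := by
          intro j
          apply Set.indicator_of_notMem
          intro hmem
          exact hωG hmem.2
        simp [this]
    calc ∑' j : ℕ, μ (T j ⁻¹' Win)
        = ∑' j : ℕ, μ (D j) := by simp_rw [heq]; rfl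
      _ = ∑' j : ℕ, ∫⁻ ω, (D j).indicator (1 : Ω → ℝ≥0∞) ω ∂μ := by
          congr 1; funext j; rw [lintegral_indicator_one (hDmeas j)]
      _ = ∫⁻ ω, ∑' j : ℕ, (D j).indicator (1 : Ω → ℝ≥0∞) ω ∂μ :=
          (lintegral_tsum (fun j =>
            ((measurable_one.indicator (hDmeas j)).aemeasurable))).symm
      _ ≤ ∫⁻ _, 2 ∂μ := lintegral_mono hpt
      _ = 2 := by simp
  -- Step B : covering
  have hcover : {ω | ∃ j : ℕ, (∑ i ∈ Finset.range (j + 1), x i ω) ∈ Set.Icc a b} ∩ G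
      ⊆ ⋃ j, B j := by
    rintro ω ⟨hωE, hωG⟩
    have hx : ∀ i, x i ω ∈ Set.Ioo (W/2) W := hωG
    have hex : ∃ k : ℕ, T (k+1) ω ∈ Set.Icc a b := by
      obtain ⟨j0, hj0⟩ := hωE
      refine ⟨j0, ?_⟩
      rw [hTapp]
      exact hj0
    obtain ⟨k, hk, hmin⟩ : ∃ k, T (k+1) ω ∈ Set.Icc a b ∧
        ∀ m < k, T (m+1) ω ∉ Set.Icc a b :=
      ⟨Nat.find hex, Nat.find_spec hex, fun m hm => Nat.find_min hex hm⟩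
    rw [Set.mem_Icc] at hk
    have hxk := hx k
    rw [Set.mem_Ioo] at hxk
    have hsucc := hTsucc k ω
    refine Set.mem_iUnion.2 ⟨k, ?_, ?_⟩
    · -- T k ω ∈ Win
      refine Set.mem_Icc.2 ⟨?_, ?_⟩
      · linarith [hxk.2, hk.1]
      · -- T k ω ≤ a
        by_contra hgt
        push_neg at hgt
        have hkb : T k ω ≤ b := by linarith [hxk.1, hk.2]
        cases k with
        | zero =>
            rw [hTapp] at hgt
            simp only [Finset.range_zero, Finset.sum_empty] at hgt
            linarith
        | succ k' =>
            exact hmin k' (Nat.lt_succ_self k') (Set.mem_Icc.2 ⟨le_of_lt hgt, hkb⟩)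
    · rw [← hTsucc]
      exact Set.mem_Icc.2 hk
  -- Final assembly
  have hfinal : μ {ω | ∃ j : ℕ, (∑ i ∈ Finset.range (j + 1), x i ω) ∈ Set.Icc a b}
      ≤ ∑' j : ℕ, μ (B j) := by
    calc μ {ω | ∃ j : ℕ, (∑ i ∈ Finset.range (j + 1), x i ω) ∈ Set.Icc a b}
        ≤ μ ((⋃ j, B j) ∪ Gᶜ) := by
          apply measure_mono
          intro ω hω
          by_cases hωG : ω ∈ G
          · exact Or.inl (hcover ⟨hω, hωG⟩)
          · exact Or.inr hωG
      _ ≤ μ (⋃ j, B j) + μ Gᶜ := measure_union_le _ _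
      _ = μ (⋃ j, B j) := by rw [hGfull, add_zero]
      _ ≤ ∑' j : ℕ, μ (B j) := measure_iUnion_le _
  calc μ {ω | ∃ j : ℕ, (∑ i ∈ Finset.range (j + 1), x i ω) ∈ Set.Icc a b}
      ≤ ∑' j : ℕ, μ (B j) := hfinal
    _ ≤ ∑' j : ℕ, c * μ (T j ⁻¹' Win) := ENNReal.tsum_le_tsum hBj
    _ = c * ∑' j : ℕ, μ (T j ⁻¹' Win) := ENNReal.tsum_mul_left
    _ ≤ c * 2 := mul_le_mul_right hsum2 _
    _ = ENNReal.ofReal (4 * (b - a) / W) := by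
        rw [hcdef, ← ENNReal.ofReal_ofNat 2,
          ← ENNReal.ofReal_mul (by apply div_nonneg <;> linarith)]
        congr 1
        field_simp
        ring
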